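/- Let f: ℝ≥0 → ℝ≥0 be increasing (f(x) ≤ f(y) whenever x ≤ y) and Lipschitz, with f(0)=0. Let u₀ ≤ v₀ a.e. in L¹₊(0,∞). Then the unique continuous solutions b^u, b^v of the Volterra equation b(t) = f(∫_t^∞ β(a)e^{-∫_{a-t}^a μ(l)dl} w₀(a-t)da + ∫₀^t β(a)e^{-∫₀^a μ(l)dl} b(t-a)da) with w₀ = u₀ and w₀ = v₀ respectively satisfy b^u(t) ≤ b^v(t) for all t ≥ 0. -/

import Mathlib

open MeasureTheory Real Set Filter

/-- comparison principle for the Volterra formulation of the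
Gurtin-MacCamy model. -/
theorem volterra_comparison_principle
    (β μ : ℝ → ℝ) (μlow : ℝ) (hμlow : 0 < μlow)
    (hβmeas : Measurable β) (hμmeas : Measurable μ)
    (hβpos : ∀ a, 0 ≤ β a) (hμpos : ∀ a, 0 ≤ μ a)
    (hβbdd : ∃ C, ∀ a, β a ≤ C) (hμbdd : ∃ C, ∀ a, μ a ≤ C)
    (hμlb : ∀ᵐ a : ℝ, a ∈ Ioi (0:ℝ) → μlow ≤ μ a)
    (hnorm : ∫ a in Ioi (0:ℝ), β a * exp (-∫ l in Ioc 0 a, μ l) = 1)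
    (f : ℝ → ℝ) (hmono : Monotone f) (L : NNReal) (hLip : LipschitzWith L f)
    (hf0 : f 0 = 0)
    (u₀ v₀ : ℝ → ℝ)
    (hu₀ : IntegrableOn u₀ (Ioi (0:ℝ))) (hv₀ : IntegrableOn v₀ (Ioi (0:ℝ)))
    (hu₀pos : ∀ᵐ a : ℝ, a ∈ Ioi (0:ℝ) → 0 ≤ u₀ a)
    (huv : ∀ᵐ a : ℝ, a ∈ Ioi (0:ℝ) → u₀ a ≤ v₀ a)
    (bu bv : ℝ → ℝ) (hbu : Continuous bu) (hbv : Continuous bv)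
    (hbueq : ∀ t : ℝ, 0 ≤ t → bu t =
      f ((∫ a in Ioi t, β a * exp (-∫ l in Ioc (a - t) a, μ l) * u₀ (a - t)) +
         ∫ a in (0:ℝ)..t, β a * exp (-∫ l in Ioc 0 a, μ l) * bu (t - a)))
    (hbveq : ∀ t : ℝ, 0 ≤ t → bv t =
      f ((∫ a in Ioi t, β a * exp (-∫ l in Ioc (a - t) a, μ l) * v₀ (a - t)) +
         ∫ a in (0:ℝ)..t, β a * exp (-∫ l in Ioc 0 a, μ l) * bv (t - a))) :
    ∀ t : ℝ, 0 ≤ t → bu t ≤ bv t := by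
  obtain ⟨Cβ, hCβ⟩ := hβbdd
  have hCβ0 : 0 ≤ Cβ := le_trans (hβpos 0) (hCβ 0)
  obtain ⟨Cμ, hCμ⟩ := hμbdd
  -- μ is interval integrable
  have hμii : ∀ a b : ℝ, IntervalIntegrable μ volume a b := by
    intro a b
    refine (intervalIntegrable_const (c := Cμ)).mono_fun hμmeas.aestronglyMeasurable ?_
    filter_upwards with x
    rw [Real.norm_eq_abs, Real.norm_eq_abs, abs_of_nonneg (hμpos x)]
    exact le_trans (hCμ x) (le_abs_self _)
  set g : ℝ → ℝ := fun x => ∫ l in (0:ℝ)..x, μ l with hgdef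
  have hgcont : Continuous g := intervalIntegral.continuous_primitive hμii 0
  have hg0 : g 0 = 0 := intervalIntegral.integral_same
  have hIoc : ∀ x y : ℝ, x ≤ y → (∫ l in Ioc x y, μ l) = g y - g x := by
    intro x y hxy
    rw [← intervalIntegral.integral_of_le hxy]
    exact (intervalIntegral.integral_interval_sub_left (hμii 0 y) (hμii 0 x)).symm
  have hgmono : ∀ x y : ℝ, x ≤ y → g x ≤ g y := by
    intro x y hxy
    have h0 : 0 ≤ ∫ l in Ioc x y, μ l :=
      setIntegral_nonneg measurableSet_Ioc (fun l _ => hμpos l)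
    have := hIoc x y hxy
    linarith
  -- the comparison function
  set h : ℝ → ℝ := fun s => max (bu s - bv s) 0 with hhdef
  have hhcont : Continuous h := (hbu.sub hbv).max continuous_const
  have hhnn : ∀ s, 0 ≤ h s := fun s => le_max_right _ _
  have hble : ∀ s, bu s ≤ bv s + h s := fun s => by
    have := le_max_left (bu s - bv s) 0
    simp only [hhdef]; linarith
  set C : ℝ := (L : ℝ) * Cβ with hCdef
  have hC0 : 0 ≤ C := mul_nonneg L.coe_nonneg hCβ0
  set H : ℝ → ℝ := fun r => ∫ s in (0:ℝ)..r, h s with hHdef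
  -- the key estimate
  have key : ∀ t : ℝ, 0 ≤ t → bu t - bv t ≤ C * H t := by
    intro t ht
    -- rewrite the Ioi-integrands
    have hrw : ∀ w : ℝ → ℝ, (fun a => β a * exp (-∫ l in Ioc (a - t) a, μ l) * w (a - t)) =
        fun a => β a * exp (-(g a - g (a - t))) * w (a - t) := by
      intro w
      funext a
      rw [hIoc (a - t) a (by linarith)]
    -- translation is measure preserving from Ioi t to Ioi 0
    have hpre : (fun a : ℝ => a - t) ⁻¹' (Ioi 0) = Ioi t := by
      ext x; simp [sub_pos]
    have mp : MeasurePreserving (fun a : ℝ => a - t)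
        (volume.restrict (Ioi t)) (volume.restrict (Ioi 0)) := by
      have := (measurePreserving_sub_right (volume : Measure ℝ) t).restrict_preimage
        (measurableSet_Ioi (a := (0:ℝ)))
      rwa [hpre] at this
    -- integrability of translates
    have hu_trans : IntegrableOn (fun a => u₀ (a - t)) (Ioi t) :=
      (mp.integrable_comp hu₀.aestronglyMeasurable).2 hu₀
    have hv_trans : IntegrableOn (fun a => v₀ (a - t)) (Ioi t) :=
      (mp.integrable_comp hv₀.aestronglyMeasurable).2 hv₀
    -- measurability of the kernel factor
    have hkmeas : Measurable fun a => β a * exp (-(g a - g (a - t))) := by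
      apply hβmeas.mul
      exact (Real.continuous_exp.comp
        ((hgcont.sub (hgcont.comp (continuous_id.sub continuous_const))).neg)).measurable
    have hkb : ∀ a : ℝ, 0 ≤ β a * exp (-(g a - g (a - t))) ∧
        β a * exp (-(g a - g (a - t))) ≤ Cβ := by
      intro a
      have he : exp (-(g a - g (a - t))) ≤ 1 := by
        rw [exp_le_one_iff]
        have := hgmono (a - t) a (by linarith)
        linarith
      constructor
      · exact mul_nonneg (hβpos a) (exp_pos _).le
      · calc β a * exp (-(g a - g (a - t))) ≤ Cβ * 1 :=
              mul_le_mul (hCβ a) he (exp_pos _).le hCβ0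
          _ = Cβ := mul_one _
    -- integrability of the two Ioi-integrands
    have hFint : ∀ w : ℝ → ℝ, IntegrableOn (fun a => w (a - t)) (Ioi t) →
        IntegrableOn (fun a => β a * exp (-(g a - g (a - t))) * w (a - t)) (Ioi t) := by
      intro w hw
      refine Integrable.mono' (hw.abs.const_mul Cβ)
        (hkmeas.aestronglyMeasurable.mul hw.aestronglyMeasurable) ?_
      filter_upwards with a
      rw [Real.norm_eq_abs, abs_mul]
      have h1 := (hkb a).1
      have h2 := (hkb a).2
      rw [abs_of_nonneg h1]
      exact mul_le_mul_of_nonneg_right h2 (abs_nonneg _)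
    have hFu := hFint u₀ hu_trans
    have hFv := hFint v₀ hv_trans
    -- monotonicity of the Ioi integrals
    have huv' : ∀ᵐ a ∂(volume.restrict (Ioi t)), u₀ (a - t) ≤ v₀ (a - t) := by
      have h1 : ∀ᵐ a ∂(volume.restrict (Ioi (0:ℝ))), u₀ a ≤ v₀ a :=
        (ae_restrict_iff' measurableSet_Ioi).2 huv
      rw [← mp.map_eq] at h1
      exact ae_of_ae_map mp.measurable.aemeasurable h1
    have hAuv : (∫ a in Ioi t, β a * exp (-(g a - g (a - t))) * u₀ (a - t)) ≤
        ∫ a in Ioi t, β a * exp (-(g a - g (a - t))) * v₀ (a - t) := by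
      refine setIntegral_mono_ae_restrict hFu hFv ?_
      filter_upwards [huv'] with a ha
      exact mul_le_mul_of_nonneg_left ha (hkb a).1
    -- interval part
    have hIrw : ∀ q : ℝ → ℝ,
        (∫ a in (0:ℝ)..t, β a * exp (-∫ l in Ioc 0 a, μ l) * q (t - a)) =
        ∫ a in (0:ℝ)..t, β a * exp (-(g a)) * q (t - a) := by
      intro q
      refine intervalIntegral.integral_congr fun a ha => ?_
      rw [uIcc_of_le ht] at ha
      rw [hIoc 0 a ha.1, hg0, sub_zero]
    have hII : ∀ q : ℝ → ℝ, Continuous q →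
        IntervalIntegrable (fun a => β a * exp (-(g a)) * q (t - a)) volume 0 t := by
      intro q hq
      obtain ⟨M, hM⟩ :=
        (isCompact_Icc (a := (0:ℝ)) (b := t)).exists_bound_of_continuousOn hq.continuousOn
      rw [intervalIntegrable_iff_integrableOn_Ioc_of_le ht]
      refine Integrable.mono' (integrable_const (Cβ * M)) ?_ ?_
      · exact ((hβmeas.mul
          (Real.continuous_exp.comp hgcont.neg).measurable).mul
          (hq.comp (continuous_const.sub continuous_id)).measurable).aestronglyMeasurable
      · refine (ae_restrict_iff' measurableSet_Ioc).2 ?_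
        filter_upwards with a ha
        have ha1 : (0:ℝ) ≤ a := ha.1.le
        have ht_a : t - a ∈ Icc (0:ℝ) t := ⟨by linarith [ha.2], by linarith⟩
        have he : exp (-(g a)) ≤ 1 := by
          rw [exp_le_one_iff]
          have := hgmono 0 a ha1
          linarith
        have hMnn : 0 ≤ M := le_trans (norm_nonneg _) (hM (t - a) ht_a)
        rw [Real.norm_eq_abs, abs_mul, abs_mul, abs_of_nonneg (hβpos a),
          abs_of_nonneg (exp_pos _).le]
        calc β a * exp (-(g a)) * |q (t - a)| ≤ Cβ * 1 * M := by
              apply mul_le_mul _ (hM (t - a) ht_a) (abs_nonneg _) (by positivity)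
              exact mul_le_mul (hCβ a) he (exp_pos _).le hCβ0
          _ = Cβ * M := by ring
    set J : ℝ := ∫ a in (0:ℝ)..t, β a * exp (-(g a)) * h (t - a) with hJdef
    have hJ0 : 0 ≤ J := by
      refine intervalIntegral.integral_nonneg ht fun a _ => ?_
      exact mul_nonneg (mul_nonneg (hβpos a) (exp_pos _).le) (hhnn _)
    have hIu_le : (∫ a in (0:ℝ)..t, β a * exp (-(g a)) * bu (t - a)) ≤
        (∫ a in (0:ℝ)..t, β a * exp (-(g a)) * bv (t - a)) + J := by
      have h1 : (∫ a in (0:ℝ)..t, β a * exp (-(g a)) * bu (t - a)) ≤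
          ∫ a in (0:ℝ)..t, β a * exp (-(g a)) * (bv (t - a) + h (t - a)) := by
        refine intervalIntegral.integral_mono_on ht (hII bu hbu)
          (hII (fun s => bv s + h s) (hbv.add hhcont)) fun a _ => ?_
        have hk : 0 ≤ β a * exp (-(g a)) := mul_nonneg (hβpos a) (exp_pos _).le
        exact mul_le_mul_of_nonneg_left (hble (t - a)) hk
      have h2 : (∫ a in (0:ℝ)..t, β a * exp (-(g a)) * (bv (t - a) + h (t - a))) =
          (∫ a in (0:ℝ)..t, β a * exp (-(g a)) * bv (t - a)) + J := by
        rw [hJdef, ← intervalIntegral.integral_add (hII bv hbv) (hII h hhcont)]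
        congr 1; funext a; ring
      linarith
    have hJle : J ≤ Cβ * H t := by
      have h1 : J ≤ ∫ a in (0:ℝ)..t, Cβ * h (t - a) := by
        refine intervalIntegral.integral_mono_on ht (hII h hhcont)
          (((continuous_const.mul (hhcont.comp
            (continuous_const.sub continuous_id))).intervalIntegrable 0 t)) fun a ha => ?_
        have he : exp (-(g a)) ≤ 1 := by
          rw [exp_le_one_iff]
          have := hgmono 0 a ha.1
          linarith
        refine mul_le_mul_of_nonneg_right ?_ (hhnn _)
        calc β a * exp (-(g a)) ≤ Cβ * 1 := mul_le_mul (hCβ a) he (exp_pos _).le hCβ0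
          _ = Cβ := mul_one _
      have h2 : (∫ a in (0:ℝ)..t, Cβ * h (t - a)) = Cβ * H t := by
        rw [intervalIntegral.integral_const_mul]
        congr 1
        have := intervalIntegral.integral_comp_sub_left (a := (0:ℝ)) (b := t) h t
        simpa [hHdef] using this
      linarith
    -- combine
    have hXle : (∫ a in Ioi t, β a * exp (-(g a - g (a - t))) * u₀ (a - t)) +
        (∫ a in (0:ℝ)..t, β a * exp (-(g a)) * bu (t - a)) ≤
        ((∫ a in Ioi t, β a * exp (-(g a - g (a - t))) * v₀ (a - t)) +
        (∫ a in (0:ℝ)..t, β a * exp (-(g a)) * bv (t - a))) + J := by linarith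
    have hbu' : bu t = f ((∫ a in Ioi t, β a * exp (-(g a - g (a - t))) * u₀ (a - t)) +
        ∫ a in (0:ℝ)..t, β a * exp (-(g a)) * bu (t - a)) := by
      rw [hbueq t ht, hrw u₀, hIrw bu]
    have hbv' : bv t = f ((∫ a in Ioi t, β a * exp (-(g a - g (a - t))) * v₀ (a - t)) +
        ∫ a in (0:ℝ)..t, β a * exp (-(g a)) * bv (t - a)) := by
      rw [hbveq t ht, hrw v₀, hIrw bv]
    set Xv : ℝ := (∫ a in Ioi t, β a * exp (-(g a - g (a - t))) * v₀ (a - t)) +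
        ∫ a in (0:ℝ)..t, β a * exp (-(g a)) * bv (t - a) with hXvdef
    have hfu : bu t ≤ f (Xv + J) := by
      rw [hbu']
      exact hmono hXle
    have hlip : f (Xv + J) - f Xv ≤ (L : ℝ) * J := by
      have := hLip.dist_le_mul (Xv + J) Xv
      rw [Real.dist_eq, Real.dist_eq] at this
      have h1 : |Xv + J - Xv| = J := by
        rw [add_sub_cancel_left, abs_of_nonneg hJ0]
      rw [h1] at this
      calc f (Xv + J) - f Xv ≤ |f (Xv + J) - f Xv| := le_abs_self _
        _ ≤ (L : ℝ) * J := this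
    have : bu t - bv t ≤ (L : ℝ) * J := by
      rw [hbv']
      linarith
    calc bu t - bv t ≤ (L : ℝ) * J := this
      _ ≤ (L : ℝ) * (Cβ * H t) := mul_le_mul_of_nonneg_left hJle L.coe_nonneg
      _ = C * H t := by rw [hCdef]; ring
  -- Gronwall argument
  intro T hT
  have hHderiv : ∀ r : ℝ, HasDerivAt H (h r) r := fun r =>
    intervalIntegral.integral_hasDerivAt_right (hhcont.intervalIntegrable 0 r)
      (hhcont.stronglyMeasurableAtFilter volume _) hhcont.continuousAt
  have hHcont : Continuous H := intervalIntegral.continuous_primitive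
    (fun a b => hhcont.intervalIntegrable a b) 0
  have hH0 : H 0 = 0 := intervalIntegral.integral_same
  have hHnn : ∀ r : ℝ, 0 ≤ r → 0 ≤ H r := fun r hr =>
    intervalIntegral.integral_nonneg hr fun s _ => hhnn s
  set G : ℝ → ℝ := fun r => exp (-C * r) * H r with hGdef
  have hGderiv : ∀ r : ℝ, HasDerivAt G (exp (-C * r) * (h r - C * H r)) r := by
    intro r
    have h1 : HasDerivAt (fun u : ℝ => exp (-C * u)) (-C * exp (-C * r)) r := by
      have := ((hasDerivAt_id r).const_mul (-C)).exp
      simpa [mul_comm] using this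
    have : HasDerivAt (fun u => exp (-C * u) * H u) _ r := h1.mul (hHderiv r)
    convert this using 1
    ring
  have hGcont : Continuous G :=
    (Real.continuous_exp.comp (continuous_const.mul continuous_id)).mul hHcont
  have hanti : AntitoneOn G (Icc 0 T) := by
    refine antitoneOn_of_deriv_nonpos (convex_Icc 0 T) hGcont.continuousOn
      (fun x _ => ((hGderiv x).differentiableAt).differentiableWithinAt) ?_
    intro x hx
    rw [interior_Icc] at hx
    rw [(hGderiv x).deriv]
    have hx0 : (0:ℝ) ≤ x := hx.1.le
    have h1 : bu x - bv x ≤ C * H x := key x hx0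
    have h2 : 0 ≤ C * H x := mul_nonneg hC0 (hHnn x hx0)
    have h3 : h x ≤ C * H x := max_le h1 h2
    have h4 : h x - C * H x ≤ 0 := by linarith
    exact mul_nonpos_of_nonneg_of_nonpos (exp_pos _).le h4
  have hGT : G T ≤ G 0 := hanti (left_mem_Icc.2 hT) (right_mem_Icc.2 hT) hT
  have hG0 : G 0 = 0 := by simp [hGdef, hH0]
  have hHT : H T ≤ 0 := by
    rw [hG0] at hGT
    have hGT' : exp (-C * T) * H T ≤ 0 := by simpa [hGdef] using hGT
    have he := exp_pos (-C * T)
    nlinarith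
  have := key T hT
  have hfin : C * H T ≤ 0 := mul_nonpos_of_nonneg_of_nonpos hC0 hHT
  linarith
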